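/- Let H = (V, A ∪ B) be a critical cross-intersecting family and let n be the maximum edge size over A ∪ B. Then max(|A|, |B|) ≤ n^n. -/

import Mathlib

open Finset

section Aux

variable {V : Type*} [DecidableEq V]

/-- Pick an edge of `A` disjoint from `S`, if one exists. -/
noncomputable def pickA (A : Finset (Finset V)) (S : Finset V) : Finset V :=
  if h : ∃ a ∈ A, Disjoint a S then h.choose else ∅

/-- The index recorded at state `S` while reconstructing `b`. -/
noncomputable def codeJ (A : Finset (Finset V)) (b S : Finset V) : ℕ :=
  if _ : ∃ a ∈ A, Disjoint a S then (pickA A S).toList.findIdx (· ∈ b) else 0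

/-- One step of the reconstruction, depending only on `A`, the index `j`, and `S`. -/
noncomputable def stepS (A : Finset (Finset V)) (j : ℕ) (S : Finset V) : Finset V :=
  if _ : ∃ a ∈ A, Disjoint a S then
    match (pickA A S).toList[j]? with
    | some v => insert v S
    | none => S
  else S

/-- The sequence of states while reconstructing `b`. -/
noncomputable def Sseq (A : Finset (Finset V)) (b : Finset V) : ℕ → Finset V
  | 0 => ∅
  | i + 1 => stepS A (codeJ A b (Sseq A b i)) (Sseq A b i)

lemma pickA_spec {A : Finset (Finset V)} {S : Finset V}
    (h : ∃ a ∈ A, Disjoint a S) : pickA A S ∈ A ∧ Disjoint (pickA A S) S := by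
  unfold pickA
  rw [dif_pos h]
  exact h.choose_spec

/-- If some edge of `A` is disjoint from `S` and the picked edge meets `b`,
the step inserts a new vertex of `b`. -/
lemma stepS_insert {A : Finset (Finset V)} {b S : Finset V}
    (h : ∃ a ∈ A, Disjoint a S) (hab : ((pickA A S) ∩ b).Nonempty) :
    ∃ v, v ∈ b ∧ v ∉ S ∧ stepS A (codeJ A b S) S = insert v S ∧
      codeJ A b S < (pickA A S).card := by
  obtain ⟨x, hx⟩ := hab
  rw [Finset.mem_inter] at hx
  have hex : ∃ y ∈ (pickA A S).toList, (decide (y ∈ b)) = true := by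
    exact ⟨x, Finset.mem_toList.2 hx.1, by simpa using hx.2⟩
  have hlt : (pickA A S).toList.findIdx (· ∈ b) < (pickA A S).toList.length :=
    List.findIdx_lt_length_of_exists hex
  set j := (pickA A S).toList.findIdx (· ∈ b) with hj
  have hv : (pickA A S).toList[j]? = some ((pickA A S).toList.get ⟨j, hlt⟩) :=
    List.getElem?_eq_getElem hlt
  set v := (pickA A S).toList.get ⟨j, hlt⟩ with hvdef
  have hvb : v ∈ b := by
    have := List.findIdx_getElem (w := hlt) (p := fun y => decide (y ∈ b))
    exact of_decide_eq_true this
  have hva : v ∈ pickA A S := Finset.mem_toList.1 (List.get_mem _ ⟨j, hlt⟩)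
  have hvS : v ∉ S := fun hvS => by
    have := (pickA_spec h).2
    exact (Finset.disjoint_left.1 this) hva hvS
  refine ⟨v, hvb, hvS, ?_, ?_⟩
  · unfold stepS codeJ
    rw [dif_pos h, dif_pos h]
    simp only [← hj, hv]
  · unfold codeJ
    rw [dif_pos h, ← hj]
    simpa [Finset.length_toList] using hlt

lemma stepS_stuck {A : Finset (Finset V)} {b S : Finset V}
    (h : ¬ ∃ a ∈ A, Disjoint a S) : stepS A (codeJ A b S) S = S := by
  unfold stepS
  rw [dif_neg h]

/-- Termination: if no edge of `A` is disjoint from `S ⊆ b` and `b` is critical, then `S = b`. -/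
lemma stuck_eq {A B : Finset (Finset V)} {b S : Finset V} (hb : b ∈ B)
    (hcritB : ∀ b ∈ B, ∀ v ∈ b, ∃ a ∈ A, a ∩ b = {v})
    (hS : S ⊆ b) (h : ¬ ∃ a ∈ A, Disjoint a S) : S = b := by
  apply Finset.Subset.antisymm hS
  intro v hv
  obtain ⟨a, ha, hav⟩ := hcritB b hb v hv
  by_contra hvS
  apply h
  refine ⟨a, ha, Finset.disjoint_left.2 fun u hua huS => ?_⟩
  have : u ∈ a ∩ b := Finset.mem_inter.2 ⟨hua, hS huS⟩
  rw [hav, Finset.mem_singleton] at this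
  exact hvS (this ▸ huS)

section Key

variable {A B : Finset (Finset V)} {n : ℕ}
  (hcross : ∀ a ∈ A, ∀ b ∈ B, (a ∩ b).Nonempty)
  (hcritB : ∀ b ∈ B, ∀ v ∈ b, ∃ a ∈ A, a ∩ b = {v})
  (hmaxA : ∀ a ∈ A, a.card ≤ n) (hmaxB : ∀ b ∈ B, b.card ≤ n)

include hcross hcritB hmaxA hmaxB in
/-- Invariant: states stay inside `b`, grow until stuck, and once stuck equal `b`;
moreover recorded indices are `< n` provided `0 < n`. -/
lemma Sseq_invariant (hn : 0 < n) {b : Finset V} (hb : b ∈ B) (i : ℕ) :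
    Sseq A b i ⊆ b ∧ (Sseq A b i = b ∨ i ≤ (Sseq A b i).card) ∧
      codeJ A b (Sseq A b i) < n := by
  induction i with
  | zero =>
    refine ⟨Finset.empty_subset _, Or.inr (Nat.zero_le _), ?_⟩
    by_cases h : ∃ a ∈ A, Disjoint a (Sseq A b 0)
    · have hab : ((pickA A (Sseq A b 0)) ∩ b).Nonempty :=
        hcross _ (pickA_spec h).1 b hb
      obtain ⟨v, _, _, _, hlt⟩ := stepS_insert h hab
      exact lt_of_lt_of_le hlt (hmaxA _ (pickA_spec h).1)
    · unfold codeJ; rw [dif_neg h]; exact hn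
  | succ i ih =>
    obtain ⟨hsub, hgrow, _⟩ := ih
    by_cases h : ∃ a ∈ A, Disjoint a (Sseq A b i)
    · have hab : ((pickA A (Sseq A b i)) ∩ b).Nonempty :=
        hcross _ (pickA_spec h).1 b hb
      obtain ⟨v, hvb, hvS, hstep, _⟩ := stepS_insert h hab
      have hS1 : Sseq A b (i + 1) = insert v (Sseq A b i) := hstep
      have hsub1 : Sseq A b (i + 1) ⊆ b := by
        rw [hS1]; exact Finset.insert_subset hvb hsub
      refine ⟨hsub1, ?_, ?_⟩
      · rcases hgrow with heq | hcard
        · exfalso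
          obtain ⟨a, ha, hdisj⟩ := h
          obtain ⟨u, hu⟩ := hcross a ha b hb
          rw [Finset.mem_inter] at hu
          rw [heq] at hdisj
          exact Finset.disjoint_left.1 hdisj hu.1 hu.2
        · right
          rw [hS1, Finset.card_insert_of_notMem hvS]
          omega
      · -- index bound at the new state
        by_cases h1 : ∃ a ∈ A, Disjoint a (Sseq A b (i + 1))
        · have hab1 : ((pickA A (Sseq A b (i + 1))) ∩ b).Nonempty :=
            hcross _ (pickA_spec h1).1 b hb
          obtain ⟨_, _, _, _, hlt⟩ := stepS_insert h1 hab1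
          exact lt_of_lt_of_le hlt (hmaxA _ (pickA_spec h1).1)
        · unfold codeJ; rw [dif_neg h1]; exact hn
    · have heq : Sseq A b i = b := stuck_eq hb hcritB hsub h
      have hS1 : Sseq A b (i + 1) = Sseq A b i := stepS_stuck h
      refine ⟨by rw [hS1, heq], Or.inl (hS1.trans heq), ?_⟩
      by_cases h1 : ∃ a ∈ A, Disjoint a (Sseq A b (i + 1))
      · exfalso; rw [hS1] at h1; exact h h1
      · unfold codeJ; rw [dif_neg h1]; exact hn

include hcross hcritB hmaxA hmaxB in
lemma Sseq_final (hn : 0 < n) {b : Finset V} (hb : b ∈ B) : Sseq A b n = b := by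
  obtain ⟨hsub, hgrow, _⟩ := Sseq_invariant hcross hcritB hmaxA hmaxB hn hb n
  rcases hgrow with heq | hcard
  · exact heq
  · exact Finset.eq_of_subset_of_card_le hsub (le_trans (hmaxB b hb) hcard)

include hcross hcritB hmaxA hmaxB in
/-- The key counting lemma: `|B| ≤ n ^ n`. -/
lemma key_card (hn : 0 < n) : B.card ≤ n ^ n := by
  classical
  set f : Finset V → (Fin n → Fin n) := fun b i =>
    ⟨codeJ A b (Sseq A b i) % n, Nat.mod_lt _ hn⟩ with hf
  have hinj : Set.InjOn f ↑B := by
    intro b hbmem b' hb'mem hfeq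
    have hb : b ∈ B := hbmem
    have hb' : b' ∈ B := hb'mem
    -- the state sequences agree
    have hstates : ∀ i : ℕ, i ≤ n → Sseq A b i = Sseq A b' i := by
      intro i
      induction i with
      | zero => intro _; rfl
      | succ i ih =>
        intro hi
        have hin : i < n := hi
        have hih := ih (le_of_lt hin)
        have hc : codeJ A b (Sseq A b i) = codeJ A b' (Sseq A b' i) := by
          have h1 := (Sseq_invariant hcross hcritB hmaxA hmaxB hn hb i).2.2
          have h2 := (Sseq_invariant hcross hcritB hmaxA hmaxB hn hb' i).2.2
          have := congrFun hfeq ⟨i, hin⟩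
          rw [hf] at this
          simp only [Fin.mk.injEq] at this
          rwa [Nat.mod_eq_of_lt h1, Nat.mod_eq_of_lt h2] at this
        show stepS A (codeJ A b (Sseq A b i)) (Sseq A b i)
            = stepS A (codeJ A b' (Sseq A b' i)) (Sseq A b' i)
        rw [hc, hih]
    calc b = Sseq A b n := (Sseq_final hcross hcritB hmaxA hmaxB hn hb).symm
      _ = Sseq A b' n := hstates n le_rfl
      _ = b' := Sseq_final hcross hcritB hmaxA hmaxB hn hb'
  have := Finset.card_le_card_of_injOn f (fun _ _ => Finset.mem_univ _) hinj
  calc B.card ≤ (Finset.univ : Finset (Fin n → Fin n)).card := this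
    _ = Fintype.card (Fin n → Fin n) := rfl
    _ = n ^ n := by rw [Fintype.card_fun]; simp

end Key

end Aux

/-- a critical cross-intersecting family with maximum edge size `n`
satisfies `max (|A|, |B|) ≤ n ^ n`. -/
theorem stmt6 {V : Type*} [DecidableEq V]
    (A B : Finset (Finset V)) (n : ℕ)
    (hA : A.Nonempty) (hB : B.Nonempty)
    (hcross : ∀ a ∈ A, ∀ b ∈ B, (a ∩ b).Nonempty)
    (hcritA : ∀ a ∈ A, ∀ v ∈ a, ∃ b ∈ B, a ∩ b = {v})
    (hcritB : ∀ b ∈ B, ∀ v ∈ b, ∃ a ∈ A, a ∩ b = {v})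
    (hmax : ∀ e ∈ A ∪ B, e.card ≤ n)
    (hmax' : ∃ e ∈ A ∪ B, e.card = n) :
    max A.card B.card ≤ n ^ n := by
  have hmaxA : ∀ a ∈ A, a.card ≤ n := fun a ha => hmax a (Finset.mem_union_left _ ha)
  have hmaxB : ∀ b ∈ B, b.card ≤ n := fun b hb => hmax b (Finset.mem_union_right _ hb)
  have hn : 0 < n := by
    by_contra hn
    push_neg at hn
    interval_cases n
    obtain ⟨e, he, hce⟩ := hmax'
    have he0 : e = ∅ := Finset.card_eq_zero.1 hce
    rw [Finset.mem_union] at he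
    rcases he with he | he
    · obtain ⟨b, hb⟩ := hB
      obtain ⟨x, hx⟩ := hcross e he b hb
      simp [he0] at hx
    · obtain ⟨a, ha⟩ := hA
      obtain ⟨x, hx⟩ := hcross a ha e he
      simp [he0] at hx
  have hcross' : ∀ b ∈ B, ∀ a ∈ A, (b ∩ a).Nonempty := fun b hb a ha => by
    rw [Finset.inter_comm]; exact hcross a ha b hb
  have hcritA' : ∀ a ∈ A, ∀ v ∈ a, ∃ b ∈ B, b ∩ a = {v} := fun a ha v hv => by
    obtain ⟨b, hb, hab⟩ := hcritA a ha v hv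
    exact ⟨b, hb, by rwa [Finset.inter_comm]⟩
  have h1 : B.card ≤ n ^ n := key_card hcross hcritB hmaxA hmaxB hn
  have h2 : A.card ≤ n ^ n := key_card hcross' hcritA' hmaxB hmaxA hn
  exact max_le h2 h1
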